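/- Let X be a connected bipartite vertex-transitive d-regular graph on n vertices. If there exists a semiregular subgroup H ≤ Aut(X) of order n/(2d) such that the quotient graph of X by the orbits of H is simple and isomorphic to K_{d,d}, then X is a d-RDR graph. -/

import Mathlib

open SimpleGraph Finset

/-- A `k`-rainbow dominating function on a graph `G`: whenever `f v = ∅`,
every color appears on some neighbor of `v`. -/
def IsKRDF {V : Type*} (G : SimpleGraph V) (k : ℕ) (f : V → Finset (Fin k)) : Prop :=
  ∀ v, f v = ∅ → ∀ c : Fin k, ∃ u, G.Adj v u ∧ c ∈ f u

/-- The weight of a rainbow dominating function. -/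
def rdfWeight {V : Type*} [Fintype V] {k : ℕ} (f : V → Finset (Fin k)) : ℕ :=
  ∑ v, (f v).card

/-- The `k`-rainbow domination number of `G`. -/
noncomputable def rainbowDomNum {V : Type*} [Fintype V] (G : SimpleGraph V) (k : ℕ) : ℕ :=
  sInf {w | ∃ f, IsKRDF G k f ∧ rdfWeight f = w}

/-- The quotient graph of `X` by the orbits of a subgroup `H` of permutations of the
vertices: orbits are adjacent iff some edge of `X` joins them. -/
def quotGraph {V : Type*} (X : SimpleGraph V) (H : Subgroup (Equiv.Perm V)) :
    SimpleGraph (Quotient (MulAction.orbitRel H V)) where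
  Adj o₁ o₂ := o₁ ≠ o₂ ∧ ∃ u v : V, X.Adj u v ∧
    Quotient.mk (MulAction.orbitRel H V) u = o₁ ∧ Quotient.mk (MulAction.orbitRel H V) v = o₂
  symm := by
    constructor
    rintro o₁ o₂ ⟨hne, u, v, ha, hu, hv⟩
    exact ⟨hne.symm, v, u, ha.symm, hv, hu⟩
  loopless := by constructor; rintro o ⟨hne, -⟩; exact hne rfl

open scoped Classical in
/-- Criterion: a connected bipartite vertex-transitive `d`-regular graph `X` on `n`
vertices with a semiregular group `H` of automorphisms of order `n/(2d)` whose
quotient graph is simple (no orbit carries an edge) and isomorphic to `K_{d,d}`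
is a `d`-RDR graph. -/
theorem rdr_of_quotient_Kdd {V : Type*} [Fintype V] (X : SimpleGraph V) (d : ℕ)
    (hd : 0 < d)
    (hconn : X.Connected)
    (hbip : ∃ s : Finset V, ∀ u v, X.Adj u v → (u ∈ s ↔ v ∉ s))
    (hvt : ∀ u v : V, ∃ g : Equiv.Perm V,
      (∀ a b, X.Adj a b ↔ X.Adj (g a) (g b)) ∧ g u = v)
    (hreg : X.IsRegularOfDegree d)
    (H : Subgroup (Equiv.Perm V))
    (hHaut : ∀ h ∈ H, ∀ a b, X.Adj a b ↔ X.Adj (h a) (h b))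
    (hsemireg : ∀ h ∈ H, h ≠ 1 → ∀ v : V, h v ≠ v)
    (hcard : Nat.card H * (2 * d) = Fintype.card V)
    (hsimple : ∀ h ∈ H, ∀ v : V, ¬ X.Adj v (h v))
    (hiso : Nonempty (quotGraph X H ≃g completeBipartiteGraph (Fin d) (Fin d))) :
    2 * rainbowDomNum X d = Fintype.card V := by

  classical
  obtain ⟨e⟩ := hiso
  set R := MulAction.orbitRel H V with hR
  -- Every fiber of the quotient map has cardinality `Nat.card H`.
  have hfiber : ∀ o : Quotient R,
      (univ.filter (fun v => Quotient.mk R v = o)).card = Nat.card H := by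
    intro o
    induction o using Quotient.inductionOn with
    | h v₀ =>
      have hinj : Function.Injective (fun h : H => h • v₀) := by
        intro h₁ h₂ hh
        by_contra hne
        have h12 : (h₂⁻¹ * h₁ : H) ≠ 1 := by
          intro hc
          have := mul_eq_one_iff_eq_inv.mp hc
          simp only [inv_inj] at this
          exact hne this.symm
        have hmem : ((h₂⁻¹ * h₁ : H) : Equiv.Perm V) ∈ H := SetLike.coe_mem _
        have hone : ((h₂⁻¹ * h₁ : H) : Equiv.Perm V) ≠ 1 := by
          intro hc
          exact h12 (OneMemClass.coe_eq_one.mp hc)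
        refine hsemireg _ hmem hone v₀ ?_
        have : (h₂⁻¹ * h₁ : H) • v₀ = v₀ := by
          rw [mul_smul]
          simp only at hh
          rw [hh, inv_smul_smul]
        simpa [Subgroup.smul_def, Equiv.Perm.smul_def] using this
      have himg : (univ.filter (fun v => Quotient.mk R v = Quotient.mk R v₀))
          = univ.image (fun h : H => h • v₀) := by
        ext v
        simp only [mem_filter, mem_univ, true_and, mem_image]
        constructor
        · intro hv
          have hv' : v ∈ MulAction.orbit H v₀ := Quotient.eq.mp hv
          obtain ⟨h, hh⟩ := hv'
          exact ⟨h, hh⟩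
        · rintro ⟨h, -, rfl⟩
          exact Quotient.sound (MulAction.mem_orbit v₀ h)
      rw [himg, Finset.card_image_of_injective _ hinj, card_univ,
        Nat.card_eq_fintype_card]
  -- The rainbow dominating function coming from the quotient `K_{d,d}` structure.
  set F : Fin d ⊕ Fin d → Finset (Fin d) :=
    Sum.elim (fun i => {i}) (fun _ => (∅ : Finset (Fin d))) with hF
  set f : V → Finset (Fin d) := fun v => F (e (Quotient.mk R v)) with hf
  have horb : ∀ (h : H) (v : V), Quotient.mk R ((h : Equiv.Perm V) v) = Quotient.mk R v := by
    intro h v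
    exact Quotient.sound (MulAction.mem_orbit v h)
  have hKRDF : IsKRDF X d f := by
    intro v hv c
    cases hs : e (Quotient.mk R v) with
    | inl i =>
      exfalso
      have hv2 : F (e (Quotient.mk R v)) = ∅ := hv
      rw [hs] at hv2
      simp only [hF, Sum.elim_inl] at hv2
      exact absurd hv2 (singleton_ne_empty i)
    | inr j =>
      have hadj : (quotGraph X H).Adj (Quotient.mk R v) (e.symm (Sum.inl c)) := by
        rw [← e.map_rel_iff]
        have h2 : e (e.symm (Sum.inl c)) = Sum.inl c := e.apply_symm_apply _
        rw [hs, h2]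
        simp [completeBipartiteGraph]
      obtain ⟨hne, u, w, huw, hu, hw⟩ := hadj
      -- u is in the orbit of v : ∃ h : H, h • v = u
      have hv' : u ∈ MulAction.orbit H v := Quotient.eq.mp hu
      obtain ⟨h, hh⟩ := hv'
      have hh' : (h : Equiv.Perm V) v = u := by
        simpa [Subgroup.smul_def, Equiv.Perm.smul_def] using hh
      refine ⟨(h⁻¹ : H) • w, ?_, ?_⟩
      · have hmem : ((h⁻¹ : H) : Equiv.Perm V) ∈ H := SetLike.coe_mem _
        have := (hHaut _ hmem u w).mp huw
        have hvu : ((h⁻¹ : H) : Equiv.Perm V) u = v := by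
          rw [← hh']
          simp [Subgroup.coe_inv]
        rw [hvu] at this
        simpa [Subgroup.smul_def, Equiv.Perm.smul_def] using this
      · have hq : Quotient.mk R ((h⁻¹ : H) • w) = Quotient.mk R w :=
          Quotient.sound (MulAction.mem_orbit w h⁻¹)
        show c ∈ F (e (Quotient.mk R ((h⁻¹ : H) • w)))
        rw [hq, hw, e.apply_symm_apply]
        simp [hF]
  -- weight computation
  have hweight : rdfWeight f = Nat.card H * d := by
    have hsplit : rdfWeight f = ∑ s : Fin d ⊕ Fin d,
        ∑ v ∈ univ.filter (fun v => e (Quotient.mk R v) = s), (f v).card := by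
      rw [rdfWeight]
      exact (Finset.sum_fiberwise_of_maps_to (fun v _ => mem_univ _) _).symm
    have hinner : ∀ s : Fin d ⊕ Fin d,
        ∑ v ∈ univ.filter (fun v => e (Quotient.mk R v) = s), (f v).card
          = Nat.card H * (F s).card := by
      intro s
      have hval : ∀ v ∈ univ.filter (fun v => e (Quotient.mk R v) = s),
          (f v).card = (F s).card := by
        intro v hv
        simp only [mem_filter] at hv
        show (F (e (Quotient.mk R v))).card = _
        rw [hv.2]
      rw [Finset.sum_congr rfl hval, Finset.sum_const, smul_eq_mul]
      congr 1
      have : (univ.filter (fun v => e (Quotient.mk R v) = s))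
          = (univ.filter (fun v => Quotient.mk R v = e.symm s)) := by
        apply Finset.filter_congr
        intro v _
        constructor
        · intro hv; rw [← hv]; exact (e.toEquiv.symm_apply_apply _).symm
        · intro hv; rw [hv]; exact e.apply_symm_apply _
      rw [this, hfiber]
    rw [hsplit]
    simp only [hinner]
    rw [← Finset.mul_sum]
    congr 1
    rw [Fintype.sum_sum_type]
    simp [hF]
  -- lower bound : any RDF has weight at least n/2
  have lower : ∀ w : ℕ, (∃ g, IsKRDF X d g ∧ rdfWeight g = w) →
      Fintype.card V ≤ 2 * w := by
    rintro w ⟨g, hg, rfl⟩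
    set A := univ.filter (fun v => g v = ∅) with hA
    set B := univ.filter (fun v => ¬ g v = ∅) with hB
    have hAB : A.card + B.card = Fintype.card V := by
      rw [hA, hB, Finset.card_filter_add_card_filter_not, card_univ]
    have hBle : B.card ≤ rdfWeight g := by
      rw [rdfWeight]
      calc B.card = ∑ _v ∈ B, 1 := by rw [Finset.sum_const, smul_eq_mul, mul_one]
        _ ≤ ∑ v ∈ B, (g v).card := by
            refine Finset.sum_le_sum ?_
            intro v hv
            rw [hB, mem_filter] at hv
            exact Nat.one_le_iff_ne_zero.mpr (fun hc => hv.2 (card_eq_zero.mp hc))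
        _ ≤ ∑ v, (g v).card := Finset.sum_le_sum_of_subset (Finset.subset_univ _)
    have hAd : ∀ v ∈ A, d ≤ ∑ u ∈ X.neighborFinset v, (g u).card := by
      intro v hv
      rw [hA, mem_filter] at hv
      have hsub : (univ : Finset (Fin d)) ⊆ (X.neighborFinset v).biUnion (fun u => g u) := by
        intro c _
        obtain ⟨u, hadj, hc⟩ := hg v hv.2 c
        exact Finset.mem_biUnion.mpr ⟨u, (X.mem_neighborFinset v u).mpr hadj, hc⟩
      calc d = (univ : Finset (Fin d)).card := by rw [card_univ, Fintype.card_fin]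
        _ ≤ ((X.neighborFinset v).biUnion (fun u => g u)).card := Finset.card_le_card hsub
        _ ≤ ∑ u ∈ X.neighborFinset v, (g u).card := Finset.card_biUnion_le
    have hdouble : ∑ v, ∑ u ∈ X.neighborFinset v, (g u).card = d * rdfWeight g := by
      have h1 : ∀ v : V, ∑ u ∈ X.neighborFinset v, (g u).card
          = ∑ u, if X.Adj v u then (g u).card else 0 := by
        intro v
        rw [SimpleGraph.neighborFinset_eq_filter, Finset.sum_filter]
      simp only [h1]
      rw [Finset.sum_comm]
      have h2 : ∀ u : V, (∑ v, if X.Adj v u then (g u).card else 0) = d * (g u).card := by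
        intro u
        rw [← Finset.sum_filter, Finset.sum_const, smul_eq_mul]
        congr 1
        have : (univ.filter (fun v => X.Adj v u)) = X.neighborFinset u := by
          rw [SimpleGraph.neighborFinset_eq_filter]
          apply Finset.filter_congr
          intro v _
          exact X.adj_comm v u
        rw [this]
        exact hreg u
      simp only [h2]
      rw [← Finset.mul_sum, rdfWeight]
    have hAle : d * A.card ≤ d * rdfWeight g := by
      calc d * A.card = A.card * d := by ring
        _ = A.card • d := by rw [smul_eq_mul]
        _ ≤ ∑ v ∈ A, ∑ u ∈ X.neighborFinset v, (g u).card := Finset.card_nsmul_le_sum A _ d hAd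
        _ ≤ ∑ v, ∑ u ∈ X.neighborFinset v, (g u).card :=
            Finset.sum_le_sum_of_subset (Finset.subset_univ _)
        _ = d * rdfWeight g := hdouble
    have hAle' : A.card ≤ rdfWeight g := Nat.le_of_mul_le_mul_left hAle hd
    omega
  -- conclusion
  have hmem : Nat.card H * d ∈ {w | ∃ g, IsKRDF X d g ∧ rdfWeight g = w} :=
    ⟨f, hKRDF, hweight⟩
  have h1 : sInf {w | ∃ g, IsKRDF X d g ∧ rdfWeight g = w} ≤ Nat.card H * d :=
    Nat.sInf_le hmem
  have h2 := Nat.sInf_mem (⟨_, hmem⟩ :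
    {w | ∃ g, IsKRDF X d g ∧ rdfWeight g = w}.Nonempty)
  have h3 := lower _ h2
  have h4 : 2 * (Nat.card H * d) = Fintype.card V := by rw [← hcard]; ring
  rw [rainbowDomNum]
  omega
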